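/- arXiv:math/0512097 — 2 statements merged into one kernel-verified Lean document; each statement's English description precedes it below -/
import Mathlib

section
/- Let C be a Serre subcategory of the category of Ψ-modules in a ringed topos (S, Ψ), and let ε: (T•, O•) → (S, Ψ) be a flat augmented simplicial (or strictly simplicial) ringed topos. Suppose ε^*: C → C• is an equivalence onto its essential image C• with quasi-inverse R⁰ε_*, and Rⁱε_* ε^* F = 0 for i > 0 and F ∈ C. Then C• is closed under extensions, kernels, and cokernels in Mod(O•). -/
/-!
STATEMENT 9: Let `C` be a Serre subcategory of the category `M` of `Ψ`-modules
on a ringed topos `(S, Ψ)`, and let `ε : (T•, O•) → (S, Ψ)` be a flat augmented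
(strictly) simplicial ringed topos, inducing an exact pullback
`ε^* : M ⥤ N` (where `N` = modules on the total topos) with right adjoint
`ε_*`.  Suppose `ε^*` restricted to `C` is an equivalence onto its essential
image `C•` with quasi-inverse `R⁰ε_*` (the unit `F → ε_* ε^* F` is an
isomorphism for `F ∈ C`), and `R¹ε_* ε^* F = 0` for `F ∈ C` (encoded as:
`ε_*` preserves short exactness of any extension whose sub is of the form
`ε^* F`, `F ∈ C`).  Then `C•` (the essential image of `C` under `ε^*`) is
closed under kernels, cokernels and extensions in `Mod(O•)`.
-/

open CategoryTheory Limits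

theorem essential_image_closed_under_ker_coker_ext
    {M N : Type*} [Category M] [Category N] [Abelian M] [Abelian N]
    (epull : M ⥤ N)  -- ε^*
    (epush : N ⥤ M)  -- ε_*
    [epull.Additive] [epush.Additive]
    (adj : epull ⊣ epush)
    -- ε^* is exact (ε is flat)
    [PreservesFiniteLimits epull] [PreservesFiniteColimits epull]
    (C : M → Prop)
    -- C is a Serre subcategory: closed under kernels, cokernels and extensions
    (hCker : ∀ {F₁ F₂ : M} (f : F₁ ⟶ F₂), C F₁ → C F₂ → C (kernel f) ∧ C (cokernel f))
    (hCext : ∀ S : ShortComplex M, S.ShortExact → C S.X₁ → C S.X₃ → C S.X₂)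
    -- the unit F → ε_* ε^* F is an isomorphism for F ∈ C
    (hunit : ∀ F : M, C F → IsIso (adj.unit.app F))
    -- R¹ε_* ε^* F = 0 for F ∈ C: ε_* preserves exactness of extensions of
    -- anything by an object of ε^*(C)
    (hR1 : ∀ S : ShortComplex N, S.ShortExact →
      (∃ F, C F ∧ Nonempty (epull.obj F ≅ S.X₁)) → (S.map epush).ShortExact) :
    -- C• := essential image of C under ε^* is closed under kernels, cokernels
    (∀ {X Y : N} (f : X ⟶ Y),
      (∃ F, C F ∧ Nonempty (epull.obj F ≅ X)) →
      (∃ F, C F ∧ Nonempty (epull.obj F ≅ Y)) →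
      (∃ F, C F ∧ Nonempty (epull.obj F ≅ kernel f)) ∧
      (∃ F, C F ∧ Nonempty (epull.obj F ≅ cokernel f))) ∧
    -- ... and extensions
    (∀ S : ShortComplex N, S.ShortExact →
      (∃ F, C F ∧ Nonempty (epull.obj F ≅ S.X₁)) →
      (∃ F, C F ∧ Nonempty (epull.obj F ≅ S.X₃)) →
      (∃ F, C F ∧ Nonempty (epull.obj F ≅ S.X₂))) := by
  constructor
  · rintro X Y f ⟨F₁, hF₁, ⟨i₁⟩⟩ ⟨F₂, hF₂, ⟨i₂⟩⟩
    -- transport f to a morphism between epull objects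
    set f' : epull.obj F₁ ⟶ epull.obj F₂ := i₁.hom ≫ f ≫ i₂.inv with hf'
    have h₂ : IsIso (adj.unit.app F₂) := hunit F₂ hF₂
    -- descend f' to g : F₁ ⟶ F₂
    set g : F₁ ⟶ F₂ := adj.unit.app F₁ ≫ epush.map f' ≫ inv (adj.unit.app F₂) with hg
    have hmapg : epull.map g = f' := by
      have htr : epull.map (adj.unit.app F₂) ≫ adj.counit.app (epull.obj F₂) = 𝟙 _ :=
        adj.left_triangle_components F₂
      have hiso : IsIso (epull.map (adj.unit.app F₂)) := inferInstance
      have hinv : epull.map (inv (adj.unit.app F₂)) = adj.counit.app (epull.obj F₂) := by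
        rw [Functor.map_inv]
        exact IsIso.inv_eq_of_hom_inv_id htr
      rw [hg]
      simp only [Functor.map_comp, hinv]
      rw [adj.counit_naturality f', ← Category.assoc,
        adj.left_triangle_components F₁, Category.id_comp]
    constructor
    · refine ⟨kernel g, (hCker g hF₁ hF₂).1, ⟨?_⟩⟩
      exact (PreservesKernel.iso epull g) ≪≫
        kernel.mapIso (epull.map g) f i₁ i₂ (by simp [hmapg, hf'])
    · refine ⟨cokernel g, (hCker g hF₁ hF₂).2, ⟨?_⟩⟩
      exact (PreservesCokernel.iso epull g) ≪≫
        cokernel.mapIso (epull.map g) f i₁ i₂ (by simp [hmapg, hf'])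
  · rintro S hS ⟨F₁, hF₁, ⟨i₁⟩⟩ ⟨F₃, hF₃, ⟨i₃⟩⟩
    have hpush := hR1 S hS ⟨F₁, hF₁, ⟨i₁⟩⟩
    have h₁ : IsIso (adj.unit.app F₁) := hunit F₁ hF₁
    have h₃ : IsIso (adj.unit.app F₃) := hunit F₃ hF₃
    -- the isos F₁ ≅ ε_* X₁, F₃ ≅ ε_* X₃
    have e₁ : F₁ ≅ epush.obj S.X₁ := asIso (adj.unit.app F₁) ≪≫ epush.mapIso i₁
    have e₃ : F₃ ≅ epush.obj S.X₃ := asIso (adj.unit.app F₃) ≪≫ epush.mapIso i₃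
    -- a short complex with ends literally in C
    set S' : ShortComplex M := ShortComplex.mk (e₁.hom ≫ epush.map S.f)
      (epush.map S.g ≫ e₃.inv)
      (by rw [Category.assoc, ← Category.assoc (epush.map S.f), ← epush.map_comp,
            S.zero, epush.map_zero, zero_comp, comp_zero]) with hS'
    have eS' : S' ≅ S.map epush := by
      refine ShortComplex.isoMk e₁ (Iso.refl _) e₃ ?_ ?_
      · show e₁.hom ≫ epush.map S.f = (e₁.hom ≫ epush.map S.f) ≫ 𝟙 _
        simp
      · show 𝟙 _ ≫ epush.map S.g = (epush.map S.g ≫ e₃.inv) ≫ e₃.hom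
        simp
    have hS'exact : S'.ShortExact := ShortComplex.shortExact_of_iso eS'.symm hpush
    have hCmid : C S'.X₂ := hCext S' hS'exact hF₁ hF₃
    -- counit is iso at X₁ and X₃
    have hcounit : ∀ (F : M) (X : N), C F → (epull.obj F ≅ X) → IsIso (adj.counit.app X) := by
      intro F X hF i
      have hu : IsIso (adj.unit.app F) := hunit F hF
      have htr : epull.map (adj.unit.app F) ≫ adj.counit.app (epull.obj F) = 𝟙 _ :=
        adj.left_triangle_components F
      have : IsIso (adj.counit.app (epull.obj F)) := by
        have : IsIso (epull.map (adj.unit.app F)) := inferInstance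
        exact IsIso.of_isIso_fac_left htr
      have hnat : epull.map (epush.map i.hom) ≫ adj.counit.app X =
          adj.counit.app (epull.obj F) ≫ i.hom := adj.counit_naturality i.hom
      have : IsIso (epull.map (epush.map i.hom) ≫ adj.counit.app X) := by
        rw [hnat]; infer_instance
      exact IsIso.of_isIso_comp_left (epull.map (epush.map i.hom)) (adj.counit.app X)
    -- morphism of short complexes (ε^* ε_* S) ⟶ S given by the counit
    set φ : (S.map epush).map epull ⟶ S :=
      { τ₁ := adj.counit.app S.X₁
        τ₂ := adj.counit.app S.X₂
        τ₃ := adj.counit.app S.X₃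
        comm₁₂ := (adj.counit.naturality S.f).symm
        comm₂₃ := (adj.counit.naturality S.g).symm } with hφ
    have hSES : ((S.map epush).map epull).ShortExact := hpush.map_of_exact epull
    have hτ₁ : IsIso φ.τ₁ := hcounit F₁ S.X₁ hF₁ i₁
    have hτ₃ : IsIso φ.τ₃ := hcounit F₃ S.X₃ hF₃ i₃
    have hτ₂ : IsIso φ.τ₂ :=
      ShortComplex.isIso₂_of_shortExact_of_isIso₁₃' φ hSES hS ‹_› ‹_›
    exact ⟨epush.obj S.X₂, hCmid, ⟨@asIso _ _ _ _ (adj.counit.app S.X₂) hτ₂⟩⟩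
end

section
/- In the formal setting of the previous statement (Rf_! := D_Y Rf_* D_X, f^! := D_X f^* D_Y with biduality and the standard adjunctions, plus the assumption that f^* is monoidal: f^*(A ⊗^L B) ≅ f^*A ⊗^L f^*B, and RHom(A,B) ≅ D(A ⊗^L D(B))), the projection formula holds: Rf_!(A ⊗^L f^* B) ≅ Rf_! A ⊗^L B for A ∈ D_c(X), B ∈ D_c(Y). -/
/-!
STATEMENT 16: In the formal setting of the previous statement
(`Rf_! := D_Y ∘ Rf_* ∘ D_X`, `f^! := D_X ∘ f^* ∘ D_Y`, with biduality, the
duality adjunction `Rf_* RHom(A, f^! B) ≅ RHom(Rf_! A, B)`, the assumption that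
`f^*` is monoidal, and `RHom(A, B) ≅ D(A ⊗^L D(B))`), the projection formula
holds: `Rf_!(A ⊗^L f^* B) ≅ Rf_! A ⊗^L B`.
-/

open CategoryTheory MonoidalCategory MonoidalClosed

/-- Dualization `D(-) = [-, Ω]` is contravariantly functorial on isos. -/
noncomputable def dmap {C : Type*} [Category C] [MonoidalCategory C] [MonoidalClosed C]
    {X Y : C} (e : X ≅ Y) (Ω : C) : (ihom Y).obj Ω ≅ (ihom X).obj Ω :=
  (MonoidalClosed.internalHom.mapIso e.op).app Ω

theorem projection_formula
    {DX DY : Type*} [Category DX] [Category DY]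
    [MonoidalCategory DX] [SymmetricCategory DX] [MonoidalClosed DX]
    [MonoidalCategory DY] [SymmetricCategory DY] [MonoidalClosed DY]
    (ΩX : DX) (ΩY : DY)
    (fpush : DX ⥤ DY)  -- Rf_*
    (fstar : DY ⥤ DX)  -- f^*
    -- biduality D ∘ D ≅ id on both sides
    (hbidX : ∀ A : DX, Nonempty (A ≅ (ihom ((ihom A).obj ΩX)).obj ΩX))
    (hbidY : ∀ A : DY, Nonempty (A ≅ (ihom ((ihom A).obj ΩY)).obj ΩY))
    -- RHom(A, B) ≅ D(A ⊗^L D(B)) on both sides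
    (hrx : ∀ A B : DX, Nonempty ((ihom A).obj B ≅ (ihom (A ⊗ (ihom B).obj ΩX)).obj ΩX))
    (hry : ∀ A B : DY, Nonempty ((ihom A).obj B ≅ (ihom (A ⊗ (ihom B).obj ΩY)).obj ΩY))
    -- f^* is monoidal
    (hmon : ∀ A B : DY, Nonempty (fstar.obj (A ⊗ B) ≅ fstar.obj A ⊗ fstar.obj B))
    -- the duality adjunction Rf_* RHom(A, f^! B) ≅ RHom(Rf_! A, B)
    (hdualadj : ∀ (A : DX) (B : DY),
      Nonempty (fpush.obj ((ihom A).obj ((ihom (fstar.obj ((ihom B).obj ΩY))).obj ΩX))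
        ≅ (ihom ((ihom (fpush.obj ((ihom A).obj ΩX))).obj ΩY)).obj B))
    (A : DX) (B : DY) :
    -- Rf_!(A ⊗^L f^* B) ≅ Rf_! A ⊗^L B, where Rf_! C = D_Y (Rf_* (D_X C))
    Nonempty ((ihom (fpush.obj ((ihom (A ⊗ fstar.obj B)).obj ΩX))).obj ΩY
      ≅ ((ihom (fpush.obj ((ihom A).obj ΩX))).obj ΩY) ⊗ B) := by
  -- notation: E = f^*(D_Y D_Y B), R = Rf_! A
  set E : DX := fstar.obj ((ihom ((ihom B).obj ΩY)).obj ΩY) with hE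
  set R : DY := (ihom (fpush.obj ((ihom A).obj ΩX))).obj ΩY with hR
  -- f^* B ≅ D_X D_X E
  have i1 : A ⊗ fstar.obj B ≅ A ⊗ (ihom ((ihom E).obj ΩX)).obj ΩX :=
    whiskerLeftIso A (fstar.mapIso (hbidY B).some ≪≫ (hbidX E).some)
  -- D_X(A ⊗ f^* B) ≅ RHom(A, D_X E) = RHom(A, f^! D_Y B)
  have i2 : (ihom (A ⊗ fstar.obj B)).obj ΩX ≅ (ihom A).obj ((ihom E).obj ΩX) :=
    (dmap i1 ΩX).symm ≪≫ (hrx A ((ihom E).obj ΩX)).some.symm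
  -- push forward and use the duality adjunction, then hry and biduality
  have i3 : fpush.obj ((ihom (A ⊗ fstar.obj B)).obj ΩX) ≅ (ihom (R ⊗ B)).obj ΩY :=
    fpush.mapIso i2 ≪≫ (hdualadj A ((ihom B).obj ΩY)).some ≪≫
      (hry R ((ihom B).obj ΩY)).some ≪≫
      dmap (whiskerLeftIso R (hbidY B).some) ΩY
  exact ⟨(dmap i3 ΩY).symm ≪≫ (hbidY (R ⊗ B)).some.symm⟩
end
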